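/- Let a ∈ (0,1), b ≥ 0, c₁, c₂ ≥ 0 and ℓ ≥ 2 an integer with a^{ℓ−1} b < 1. Let (kₘ)_{m≥1} be a strictly increasing sequence of naturals with k₁ = 0 and kₘ₊₁ − kₘ ≥ ℓ for all m. Then there exists a constant C ≥ 0, depending only on a, b, c₁, c₂, ℓ (and not on V(0) or the sequence (kₘ)), such that every sequence V : ℕ → [0,∞) satisfying V(k+1) ≤ a V(k) + c₁ whenever k is not one of the kₘ and V(k+1) ≤ b V(k) + c₂ whenever k = kₘ for some m, satisfies limsup_{k→∞} V(k) ≤ C; moreover every such V is bounded. -/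

import Mathlib

set_option maxHeartbeats 1000000

open Filter

/-- let `a ∈ (0,1)`, `b ≥ 0`, `c₁, c₂ ≥ 0`, `ℓ ≥ 2` an integer with
`a^(ℓ−1) b < 1`, and let `(kₘ)` be strictly increasing impulse instants with `k₁ = 0`
and consecutive gaps at least `ℓ`. Then there is a constant `C ≥ 0`, depending only on
`a, b, c₁, c₂, ℓ` (not on `V(0)` or the impulse instants), such that every nonnegative
sequence `V` with `V(k+1) ≤ a V(k) + c₁` off the impulse instants and
`V(k+1) ≤ b V(k) + c₂` at the impulse instants satisfies `limsup V ≤ C`; moreover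
every such `V` is bounded. -/
theorem impulsive_recursion_limsup_bound (a b c₁ c₂ : ℝ) (ℓ : ℕ)
    (ha : 0 < a) (ha' : a < 1) (hb : 0 ≤ b) (hc₁ : 0 ≤ c₁) (hc₂ : 0 ≤ c₂)
    (hℓ : 2 ≤ ℓ) (hab : a ^ (ℓ - 1) * b < 1) :
    ∃ C ≥ (0 : ℝ), ∀ (km : ℕ → ℕ) (V : ℕ → ℝ),
      StrictMono km → km 0 = 0 → (∀ m, km m + ℓ ≤ km (m + 1)) →
      (∀ k, 0 ≤ V k) →
      (∀ k, k ∉ Set.range km → V (k + 1) ≤ a * V k + c₁) →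
      (∀ k, k ∈ Set.range km → V (k + 1) ≤ b * V k + c₂) →
      limsup V atTop ≤ C ∧ ∃ B, ∀ k, V k ≤ B := by
  have h1a : 0 < 1 - a := by linarith
  set ρ : ℝ := a ^ (ℓ - 1) * b with hρdef
  have hρ0 : 0 ≤ ρ := mul_nonneg (pow_nonneg ha.le _) hb
  have hρ1 : ρ < 1 := hab
  have h1ρ : 0 < 1 - ρ := by linarith
  set K : ℝ := c₂ + c₁ / (1 - a) with hKdef
  have hK0 : 0 ≤ K := add_nonneg hc₂ (div_nonneg hc₁ h1a.le)
  set S : ℝ := K / (1 - ρ) with hSdef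
  have hS0 : 0 ≤ S := div_nonneg hK0 h1ρ.le
  have hSK : ρ * S + K = S := by
    have h := div_mul_cancel₀ K h1ρ.ne'
    rw [← hSdef] at h
    linear_combination -h
  set D : ℝ := max 1 b with hDdef
  have hD1 : (1 : ℝ) ≤ D := le_max_left _ _
  have hDb : b ≤ D := le_max_right _ _
  have hD0 : (0 : ℝ) ≤ D := by linarith
  refine ⟨D * S + K, by positivity, ?_⟩
  intro km V hmono hk0 hgap hVnn hoff hon
  -- geometric decay along impulse-free stretches
  have chain : ∀ s n : ℕ, (∀ j, j < n → s + j ∉ Set.range km) →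
      V (s + n) ≤ a ^ n * V s + c₁ / (1 - a) := by
    intro s n
    induction n with
    | zero =>
      intro _
      have := div_nonneg hc₁ h1a.le
      rw [Nat.add_zero, pow_zero, one_mul]
      linarith
    | succ n ih =>
      intro h
      have h1 := ih (fun j hj => h j (hj.trans (Nat.lt_succ_self n)))
      have h2 := hoff (s + n) (h n (Nat.lt_succ_self n))
      have key : a * (c₁ / (1 - a)) + c₁ = c₁ / (1 - a) := by
        field_simp; ring
      have h3 : a * V (s + n) ≤ a * (a ^ n * V s + c₁ / (1 - a)) :=
        mul_le_mul_of_nonneg_left h1 ha.le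
      have e : s + (n + 1) = s + n + 1 := rfl
      rw [e, pow_succ]
      nlinarith
  -- points strictly between impulses are impulse-free
  have notin : ∀ m k, km m < k → k < km (m + 1) → k ∉ Set.range km := by
    rintro m k h1 h2 ⟨n, rfl⟩
    have hn1 : m < n := hmono.lt_iff_lt.mp h1
    have hn2 : n < m + 1 := hmono.lt_iff_lt.mp h2
    omega
  -- contraction from one impulse instant to the next
  have step : ∀ m, V (km (m + 1)) ≤ ρ * V (km m) + K := by
    intro m
    have hg : km m + ℓ ≤ km (m + 1) := hgap m
    set g : ℕ := km (m + 1) - km m with hgdef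
    have hgℓ : ℓ ≤ g := by omega
    have hrepr : km (m + 1) = (km m + 1) + (g - 1) := by omega
    have hfree : ∀ j, j < g - 1 → km m + 1 + j ∉ Set.range km := by
      intro j hj
      exact notin m _ (by omega) (by omega)
    have hch := chain (km m + 1) (g - 1) hfree
    rw [← hrepr] at hch
    have himp : V (km m + 1) ≤ b * V (km m) + c₂ := hon (km m) ⟨m, rfl⟩
    have hpow : a ^ (g - 1) ≤ a ^ (ℓ - 1) :=
      pow_le_pow_of_le_one ha.le ha'.le (by omega)
    have hpow0 : 0 ≤ a ^ (g - 1) := pow_nonneg ha.le _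
    have hpow1 : a ^ (g - 1) ≤ 1 := pow_le_one₀ ha.le ha'.le
    have h4 : a ^ (g - 1) * V (km m + 1) ≤ a ^ (g - 1) * (b * V (km m) + c₂) :=
      mul_le_mul_of_nonneg_left himp hpow0
    have h5 : a ^ (g - 1) * (b * V (km m)) ≤ a ^ (ℓ - 1) * (b * V (km m)) :=
      mul_le_mul_of_nonneg_right hpow (mul_nonneg hb (hVnn _))
    have h6 : a ^ (g - 1) * c₂ ≤ c₂ := by nlinarith
    rw [hKdef, hρdef]
    nlinarith [hch]
  -- bound at impulse instants
  have atImp : ∀ m, V (km m) ≤ ρ ^ m * V 0 + S := by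
    intro m
    induction m with
    | zero =>
      rw [hk0, pow_zero, one_mul]
      linarith [hVnn 0]
    | succ m ih =>
      have h1 := step m
      have h2 : ρ * V (km m) ≤ ρ * (ρ ^ m * V 0 + S) :=
        mul_le_mul_of_nonneg_left ih hρ0
      have : ρ * (ρ ^ m * V 0 + S) + K = ρ ^ (m + 1) * V 0 + S := by
        rw [pow_succ]; nlinarith [hSK]
      linarith
  -- bound on each inter-impulse interval
  have interval : ∀ m k, km m ≤ k → k < km (m + 1) → V k ≤ D * V (km m) + K := by
    intro m k h1 h2
    rcases eq_or_lt_of_le h1 with heq | hlt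
    · subst heq
      nlinarith [hVnn (km m)]
    · set j : ℕ := k - km m - 1 with hjdef
      have hrepr : k = (km m + 1) + j := by omega
      have hfree : ∀ i, i < j → km m + 1 + i ∉ Set.range km := by
        intro i hi
        exact notin m _ (by omega) (by omega)
      have hch := chain (km m + 1) j hfree
      rw [← hrepr] at hch
      have himp : V (km m + 1) ≤ b * V (km m) + c₂ := hon (km m) ⟨m, rfl⟩
      have hpow1 : a ^ j ≤ 1 := pow_le_one₀ ha.le ha'.le
      have hpow0 : 0 ≤ a ^ j := pow_nonneg ha.le _
      have h4 : a ^ j * V (km m + 1) ≤ V (km m + 1) := by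
        nlinarith [hVnn (km m + 1)]
      have h5 : b * V (km m) ≤ D * V (km m) :=
        mul_le_mul_of_nonneg_right hDb (hVnn _)
      rw [hKdef]
      linarith
  -- every k lies in some interval
  have locate : ∀ k, ∃ m, km m ≤ k ∧ k < km (m + 1) := by
    intro k
    have hP0 : km 0 ≤ k := by omega
    set m := Nat.findGreatest (fun n => km n ≤ k) k with hm
    have hmk : km m ≤ k :=
      Nat.findGreatest_spec (P := fun n => km n ≤ k) (Nat.zero_le k) hP0
    refine ⟨m, hmk, ?_⟩
    by_contra hcon
    push_neg at hcon
    have hle : m + 1 ≤ k := le_trans (hmono.le_apply) hcon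
    have hlt : m < m + 1 := Nat.lt_succ_self m
    exact Nat.findGreatest_is_greatest (P := fun n => km n ≤ k) (hm ▸ hlt) hle hcon
  -- global pointwise bound
  have global : ∀ k, ∀ m, km m ≤ k → k < km (m + 1) →
      V k ≤ D * S + K + D * V 0 * ρ ^ m := by
    intro k m h1 h2
    have h3 := interval m k h1 h2
    have h4 := atImp m
    have h5 : D * V (km m) ≤ D * (ρ ^ m * V 0 + S) :=
      mul_le_mul_of_nonneg_left h4 hD0
    nlinarith
  constructor
  · -- limsup bound
    have cobdd : IsCoboundedUnder (· ≤ ·) atTop V :=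
      isCoboundedUnder_le_of_le atTop (x := 0) hVnn
    refine le_of_forall_pos_le_add ?_
    intro ε hε
    refine Filter.limsup_le_of_le cobdd ?_
    have hDV0 : 0 ≤ D * V 0 := mul_nonneg hD0 (hVnn 0)
    obtain ⟨M, hM⟩ : ∃ M, D * V 0 * ρ ^ M ≤ ε := by
      rcases eq_or_lt_of_le hDV0 with h0 | h0
      · exact ⟨0, by nlinarith⟩
      · obtain ⟨M, hM⟩ := exists_pow_lt_of_lt_one (div_pos hε h0) hρ1
        exact ⟨M, ((lt_div_iff₀' h0).mp hM).le⟩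
    filter_upwards [eventually_ge_atTop (km M)] with k hk
    obtain ⟨m, h1, h2⟩ := locate k
    have hMm : M ≤ m := by
      have : km M < km (m + 1) := lt_of_le_of_lt hk h2
      have := hmono.lt_iff_lt.mp this
      omega
    have hρm : ρ ^ m ≤ ρ ^ M := pow_le_pow_of_le_one hρ0 hρ1.le hMm
    have := global k m h1 h2
    nlinarith
  · -- boundedness
    refine ⟨D * S + K + D * V 0, ?_⟩
    intro k
    obtain ⟨m, h1, h2⟩ := locate k
    have hρm : ρ ^ m ≤ 1 := pow_le_one₀ hρ0 hρ1.le
    have := global k m h1 h2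
    nlinarith [mul_nonneg hD0 (hVnn 0)]
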